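/- Let k ≥ 2 and let ℒ = {l₁, l₂, …, l_s} be a set of s nonnegative integers with l₁ < l₂ < … < l_s. Suppose 𝒜 = {A₁, A₂, …, A_m} is a family of m pairwise distinct subsets of [n] such that |A_{i₁} ∩ A_{i₂} ∩ … ∩ A_{i_k}| ∈ ℒ for every collection of k distinct members of 𝒜. If n ≥ (C(h² + h, l₁+1) + 1)·s + l₁, where h is the maximum size of a member of 𝒜, then m ≤ (k − 1)·[C(n−l₁, s) + C(n−l₁, s−1) + … + C(n−l₁, 0)]. -/

import Mathlib

open Finset

variable {α : Type*} [DecidableEq α]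

noncomputable section

/-- indicator monomial -/
def eT (T : Finset α) : Finset α → ℝ := fun X => if T ⊆ X then 1 else 0

lemma li_of_eval {ι β : Type*} (w : ι → ℕ) (P : ι → β → ℝ) (Y : ι → β)
    (h0 : ∀ i j, i ≠ j → w j ≤ w i → P i (Y j) = 0)
    (h1 : ∀ i, P i (Y i) ≠ 0) : LinearIndependent ℝ P := by
  rw [linearIndependent_iff']
  intro s g hsum
  suffices H : ∀ N, ∀ i ∈ s, w i = N → g i = 0 by
    intro i hi; exact H (w i) i hi rfl
  intro N
  induction N using Nat.strong_induction_on with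
  | _ N ih =>
    intro i hi hwi
    have hev := congrFun hsum (Y i)
    simp only [Finset.sum_apply, Pi.smul_apply, smul_eq_mul, Pi.zero_apply] at hev
    have hsingle : ∑ j ∈ s, g j * P j (Y i) = g i * P i (Y i) := by
      apply Finset.sum_eq_single
      · intro j hj hji
        rcases le_or_gt (w i) (w j) with hle | hlt
        · rw [h0 j i hji hle, mul_zero]
        · rw [ih (w j) (hwi ▸ hlt) j hj rfl, zero_mul]
      · intro hns; exact absurd hi hns
    rw [hsingle] at hev
    exact (mul_eq_zero.mp hev).resolve_right (h1 i)

lemma card_le_of_li_span {ι M : Type*} [Fintype ι] [AddCommGroup M] [Module ℝ M]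
    (v : ι → M) (hv : LinearIndependent ℝ v) (S : Finset M)
    (hmem : ∀ i, v i ∈ Submodule.span ℝ (S : Set M)) : Fintype.card ι ≤ S.card := by
  let W := Submodule.span ℝ (S : Set M)
  haveI : FiniteDimensional ℝ W := FiniteDimensional.span_of_finite ℝ S.finite_toSet
  let v' : ι → W := fun i => ⟨v i, hmem i⟩
  have hv' : LinearIndependent ℝ v' := by
    apply LinearIndependent.of_comp W.subtype
    exact hv
  calc Fintype.card ι ≤ Module.finrank ℝ W := hv'.fintype_card_le_finrank
    _ ≤ S.card := finrank_span_finset_le_card S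

lemma mul_mem_span (A : Finset α) (r : ℝ) (d : ℕ) (g : Finset α → ℝ)
    (hg : g ∈ Submodule.span ℝ (eT '' {T : Finset α | T ⊆ A ∧ T.card ≤ d})) :
    (fun X => (((A ∩ X).card : ℝ) - r) * g X) ∈
      Submodule.span ℝ (eT '' {T : Finset α | T ⊆ A ∧ T.card ≤ d + 1}) := by
  induction hg using Submodule.span_induction with
  | mem x hx =>
    obtain ⟨T, ⟨hTA, hTd⟩, rfl⟩ := hx
    have key : (fun X => (((A ∩ X).card : ℝ) - r) * eT T X)
        = (∑ a ∈ A, eT (insert a T)) - r • eT T := by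
      funext X
      by_cases hTX : T ⊆ X
      · have h1 : eT T X = 1 := if_pos hTX
        have h2 : ∀ a ∈ A, eT (insert a T) X = if a ∈ X then 1 else 0 := by
          intro a _
          simp only [eT, insert_subset_iff, hTX, and_true]
        simp only [Finset.sum_apply, Pi.sub_apply, Pi.smul_apply, smul_eq_mul, h1, mul_one]
        rw [Finset.sum_congr rfl h2, Finset.sum_boole]
        rw [Finset.filter_mem_eq_inter]
      · have h1 : eT T X = 0 := if_neg hTX
        have h2 : ∀ a ∈ A, eT (insert a T) X = 0 := by
          intro a _
          apply if_neg
          intro hsub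
          exact hTX (Finset.Subset.trans (Finset.subset_insert a T) hsub)
        simp only [Finset.sum_apply, Pi.sub_apply, Pi.smul_apply, smul_eq_mul, h1, mul_zero]
        rw [Finset.sum_congr rfl h2]
        simp
    rw [key]
    apply sub_mem
    · apply Submodule.sum_mem
      intro a ha
      apply Submodule.subset_span
      exact ⟨insert a T, ⟨Finset.insert_subset ha hTA,
        le_trans (Finset.card_insert_le a T) (Nat.add_le_add_right hTd 1)⟩, rfl⟩
    · apply Submodule.smul_mem
      apply Submodule.subset_span
      exact ⟨T, ⟨hTA, le_trans hTd (Nat.le_succ d)⟩, rfl⟩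
  | zero =>
    have : (fun X => (((A ∩ X).card : ℝ) - r) * (0 : Finset α → ℝ) X) = 0 := by
      funext X; simp
    rw [this]; exact Submodule.zero_mem _
  | add x y hx hy ihx ihy =>
    have : (fun X => (((A ∩ X).card : ℝ) - r) * (x + y) X)
        = (fun X => (((A ∩ X).card : ℝ) - r) * x X) + (fun X => (((A ∩ X).card : ℝ) - r) * y X) := by
      funext X; simp [mul_add]
    rw [this]; exact Submodule.add_mem _ ihx ihy
  | smul c x hx ihx =>
    have : (fun X => (((A ∩ X).card : ℝ) - r) * (c • x) X)
        = c • (fun X => (((A ∩ X).card : ℝ) - r) * x X) := by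
      funext X; simp [smul_eq_mul]; ring
    rw [this]; exact Submodule.smul_mem _ c ihx

lemma prod_mem_span (A : Finset α) (L : Finset ℕ) :
    (fun X : Finset α => ∏ r ∈ L, (((A ∩ X).card : ℝ) - r)) ∈
      Submodule.span ℝ (eT '' {T : Finset α | T ⊆ A ∧ T.card ≤ L.card}) := by
  induction L using Finset.cons_induction with
  | empty =>
    have : (fun X : Finset α => ∏ r ∈ (∅ : Finset ℕ), (((A ∩ X).card : ℝ) - r)) = eT ∅ := by
      funext X; simp [eT]
    rw [this]
    exact Submodule.subset_span ⟨∅, by simp, rfl⟩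
  | cons r L hr ih =>
    have : (fun X : Finset α => ∏ u ∈ Finset.cons r L hr, (((A ∩ X).card : ℝ) - u))
        = (fun X => (((A ∩ X).card : ℝ) - r) * ∏ u ∈ L, (((A ∩ X).card : ℝ) - u)) := by
      funext X; rw [Finset.prod_cons]
    rw [this, Finset.card_cons]
    exact mul_mem_span A r L.card _ ih

local instance instDecEqFun : DecidableEq (Finset α → ℝ) := Classical.decEq _

def monoSet (Ω : Finset α) (t : ℕ) : Finset (Finset α → ℝ) :=
  (Ω.powerset.filter (fun T => T.card ≤ t)).image eT

lemma monoSet_card_le (Ω : Finset α) (t : ℕ) :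
    (monoSet Ω t).card ≤ ∑ i ∈ Finset.range (t+1), (Ω.card).choose i := by
  refine le_trans Finset.card_image_le ?_
  refine le_trans (Finset.card_le_card
    (?_ : _ ⊆ (Finset.range (t+1)).biUnion (fun i => Ω.powersetCard i))) ?_
  · intro T hT
    simp only [mem_filter, mem_powerset] at hT
    exact mem_biUnion.mpr ⟨T.card, mem_range.mpr (Nat.lt_succ_of_le hT.2),
      mem_powersetCard.mpr ⟨hT.1, rfl⟩⟩
  · exact le_trans card_biUnion_le (by simp [card_powersetCard])

lemma span_le_monoSet {Ω A : Finset α} (hA : A ⊆ Ω) {d t : ℕ} (hd : d ≤ t) :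
    Submodule.span ℝ (eT '' {T : Finset α | T ⊆ A ∧ T.card ≤ d})
      ≤ Submodule.span ℝ ((monoSet Ω t : Finset (Finset α → ℝ)) : Set (Finset α → ℝ)) := by
  apply Submodule.span_mono
  rintro x ⟨T, ⟨hTA, hTd⟩, rfl⟩
  have : eT T ∈ monoSet Ω t := by
    apply mem_image_of_mem
    simp only [mem_filter, mem_powerset]
    exact ⟨hTA.trans hA, hTd.trans hd⟩
  exact this

end

open Finset

variable {α : Type*} [DecidableEq α]

theorem GS [Fintype α] (k : ℕ) (hk : 2 ≤ k) (L : Finset ℕ) (t : ℕ) (hLt : L.card ≤ t)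
    (Ω : Finset α) : ∀ (𝒜 : Finset (Finset α)), (∀ B ∈ 𝒜, B ⊆ Ω) →
    (∀ 𝒮 ⊆ 𝒜, 𝒮.card = k → ((𝒮.inf id).card ∈ L)) →
    𝒜.card ≤ (k - 1) * ∑ i ∈ Finset.range (t+1), (Ω.card).choose i := by
  induction k, hk using Nat.le_induction with
  | base =>
    intro 𝒜 hΩ hint
    have hcard : 𝒜.card = Fintype.card {x // x ∈ 𝒜} := (Fintype.card_coe 𝒜).symm
    have h21 : (2 - 1 : ℕ) = 1 := rfl
    rw [hcard, h21, one_mul]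
    set P : {x // x ∈ 𝒜} → Finset α → ℝ :=
      fun B X => ∏ r ∈ L.filter (fun r => r < (B : Finset α).card),
        ((((B : Finset α) ∩ X).card : ℝ) - r) with hP
    have hli : LinearIndependent ℝ P := by
      apply li_of_eval (ι := {x // x ∈ 𝒜}) (fun B => (B : Finset α).card) P
        (fun B => (B : Finset α))
      · intro i j hij hle
        have hne : (i : Finset α) ≠ (j : Finset α) := fun hcc => hij (Subtype.ext hcc)
        have hpair : ({(i : Finset α), (j : Finset α)} : Finset (Finset α)) ⊆ 𝒜 := by
          intro x hx
          rcases mem_insert.mp hx with rfl | hx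
          · exact i.2
          · rw [mem_singleton.mp hx]; exact j.2
        have hpc : ({(i : Finset α), (j : Finset α)} : Finset (Finset α)).card = 2 :=
          card_pair hne
        have hinf := hint _ hpair hpc
        have hinfeq : (({(i : Finset α), (j : Finset α)} : Finset (Finset α)).inf id)
            = (i : Finset α) ∩ (j : Finset α) := by
          simp [inf_insert, inf_singleton]
        rw [hinfeq] at hinf
        have hij1 : ((i : Finset α) ∩ (j : Finset α)).card ≤ (j : Finset α).card :=
          card_le_card inter_subset_right
        have hlt : ((i : Finset α) ∩ (j : Finset α)).card < (i : Finset α).card := by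
          rcases lt_or_eq_of_le (le_trans hij1 hle) with hlt | heq
          · exact hlt
          · exfalso
            have h2 : (i : Finset α) ∩ (j : Finset α) = (j : Finset α) :=
              eq_of_subset_of_card_le inter_subset_right (by omega)
            have h3 : (j : Finset α) ⊆ (i : Finset α) := by
              rw [← h2]; exact inter_subset_left
            exact hne (eq_of_subset_of_card_le h3 (by omega)).symm
        apply Finset.prod_eq_zero (i := ((i : Finset α) ∩ (j : Finset α)).card)
        · exact mem_filter.mpr ⟨hinf, hlt⟩
        · simp
      · intro i
        rw [hP]
        simp only [inter_self]
        apply Finset.prod_ne_zero_iff.mpr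
        intro r hr
        have : r < (i : Finset α).card := (mem_filter.mp hr).2
        intro hzero
        have : ((i : Finset α).card : ℝ) = r := by linarith [sub_eq_zero.mp hzero]
        exact absurd (Nat.cast_injective this) (by omega)
    apply le_trans (card_le_of_li_span P hli (monoSet Ω t) ?_) (monoSet_card_le Ω t)
    intro i
    exact span_le_monoSet (hΩ _ i.2) (le_trans (card_filter_le _ _) hLt)
      (prod_mem_span (i : Finset α) _)
  | succ k hk2 ih =>
    intro 𝒜 hΩ hint
    classical
    set D := ∑ i ∈ Finset.range (t+1), (Ω.card).choose i with hD
    have hP : (𝒜.powerset.filter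
        (fun ℳ => ∀ 𝒮 ⊆ ℳ, 𝒮.card = k → (𝒮.inf id).card ∈ L)).Nonempty := by
      refine ⟨∅, ?_⟩
      simp only [mem_filter, mem_powerset]
      refine ⟨empty_subset _, ?_⟩
      intro 𝒮 h𝒮 hc
      exfalso
      have : 𝒮 = ∅ := subset_empty.mp h𝒮
      rw [this] at hc
      simp at hc
      omega
    obtain ⟨ℳ, hℳmem, hmax⟩ := Finset.exists_maximal hP
    rw [mem_filter, mem_powerset] at hℳmem
    obtain ⟨hℳ𝒜, hQℳ⟩ := hℳmem
    have hMbound : ℳ.card ≤ (k - 1) * D := ih ℳ (fun B hB => hΩ B (hℳ𝒜 hB)) hQℳ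
    set 𝒞 := 𝒜 \ ℳ with h𝒞
    have key : ∀ C : {x // x ∈ 𝒞}, ∃ 𝒮 : Finset (Finset α),
        (C : Finset α) ∈ 𝒮 ∧ 𝒮 ⊆ insert (C : Finset α) ℳ ∧ 𝒮.card = k ∧
        (𝒮.inf id).card ∉ L := by
      rintro ⟨C, hC⟩
      rw [h𝒞, mem_sdiff] at hC
      obtain ⟨hC𝒜, hCℳ⟩ := hC
      have hnotmem : insert C ℳ ∉ 𝒜.powerset.filter
          (fun ℳ' => ∀ 𝒮 ⊆ ℳ', 𝒮.card = k → (𝒮.inf id).card ∈ L) := by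
        intro hmem
        exact (Finset.ssubset_insert hCℳ).2 (hmax hmem (Finset.subset_insert _ _))
      rw [mem_filter, mem_powerset] at hnotmem
      push_neg at hnotmem
      obtain ⟨𝒮, h𝒮sub, h𝒮card, h𝒮notL⟩ := hnotmem (insert_subset hC𝒜 hℳ𝒜)
      refine ⟨𝒮, ?_, h𝒮sub, h𝒮card, h𝒮notL⟩
      by_contra hCnot
      exact h𝒮notL (hQℳ 𝒮 ((subset_insert_iff_of_notMem hCnot).mp h𝒮sub) h𝒮card)
    choose 𝒮f hCmem hsubins hcardk hnotL using key
    set Y : {x // x ∈ 𝒞} → Finset α := fun C => (𝒮f C).inf id with hY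
    set P : {x // x ∈ 𝒞} → Finset α → ℝ :=
      fun C X => ∏ r ∈ L, ((((C : Finset α) ∩ X).card : ℝ) - r) with hPdef
    have h𝒞𝒜 : 𝒞 ⊆ 𝒜 := sdiff_subset
    have hli : LinearIndependent ℝ P := by
      apply li_of_eval (fun _ => 0) P Y
      · intro C C' hne _
        have hCC' : (C : Finset α) ≠ (C' : Finset α) := fun hcc => hne (Subtype.ext hcc)
        have hCnotin : (C : Finset α) ∉ 𝒮f C' := by
          intro hmem
        -- C ∈ 𝒮f C' ⊆ insert C' ℳ, C ∉ ℳ, C ≠ C'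
          rcases mem_insert.mp (hsubins C' hmem) with heq | hmem'
          · exact hCC' heq
          · have hrec : (C : Finset α) ∈ 𝒜 \ ℳ := C.2
            exact (mem_sdiff.mp hrec).2 hmem'
        have hsub𝒜 : insert (C : Finset α) (𝒮f C') ⊆ 𝒜 := by
          apply insert_subset
          · exact h𝒞𝒜 C.2
          · intro x hx
            rcases mem_insert.mp (hsubins C' hx) with heq | hmem'
            · rw [heq]; exact h𝒞𝒜 C'.2
            · exact hℳ𝒜 hmem'
        have hcard' : (insert (C : Finset α) (𝒮f C')).card = k + 1 := by
          rw [card_insert_of_notMem hCnotin, hcardk C']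
        have hinf := hint _ hsub𝒜 hcard'
        have hinfeq : ((insert (C : Finset α) (𝒮f C')).inf id)
            = (C : Finset α) ∩ Y C' := by
          rw [inf_insert]
          rfl
        rw [hinfeq] at hinf
        exact Finset.prod_eq_zero hinf (by simp)
      · intro C
        have hYC : Y C ≤ (C : Finset α) := Finset.inf_le (hCmem C)
        have hint_eq : (C : Finset α) ∩ Y C = Y C := inter_eq_right.mpr hYC
        rw [hPdef]
        simp only [hint_eq]
        apply Finset.prod_ne_zero_iff.mpr
        intro r hr hzero
        have : ((Y C).card : ℝ) = r := by linarith [sub_eq_zero.mp hzero]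
        exact absurd (Nat.cast_injective this ▸ hr) (hnotL C)
    have h𝒞bound : 𝒞.card ≤ D := by
      have := card_le_of_li_span P hli (monoSet Ω t) (fun C =>
        span_le_monoSet (hΩ _ (h𝒞𝒜 C.2)) hLt (prod_mem_span (C : Finset α) L))
      rw [Fintype.card_coe] at this
      exact le_trans this (monoSet_card_le Ω t)
    have hsplit : 𝒜.card = ℳ.card + 𝒞.card := by
      rw [h𝒞, card_sdiff_of_subset hℳ𝒜]
      have := card_le_card hℳ𝒜
      omega
    rw [hsplit]
    calc ℳ.card + 𝒞.card ≤ (k - 1) * D + D := Nat.add_le_add hMbound h𝒞bound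
      _ = k * D := by
          have h1 : k - 1 + 1 = k := by omega
          have h2 : (k - 1) * D + D = (k - 1 + 1) * D := by ring
          rw [h1] at h2
          exact h2
      _ = (k + 1 - 1) * D := by rw [Nat.add_sub_cancel]

lemma inf_subset' {ι α : Type*} [Fintype α] [DecidableEq α] {s : Finset ι}
    {f : ι → Finset α} {b : ι} (hb : b ∈ s) : s.inf f ⊆ f b :=
  Finset.le_iff_subset.mp (Finset.inf_le hb)

lemma subset_inf' {ι α : Type*} [Fintype α] [DecidableEq α] {s : Finset ι}
    {f : ι → Finset α} {B : Finset α} (h : ∀ b ∈ s, B ⊆ f b) : B ⊆ s.inf f :=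
  Finset.le_iff_subset.mp (Finset.le_inf fun b hb => Finset.le_iff_subset.mpr (h b hb))

lemma inf_sdiff_eq {α : Type*} [DecidableEq α] [Fintype α] (𝒮 : Finset (Finset α))
    (K : Finset α) (hne : 𝒮.Nonempty) :
    𝒮.inf (fun B => B \ K) = 𝒮.inf id \ K := by
  obtain ⟨B₀, hB₀⟩ := hne
  ext x
  simp only [Finset.mem_inf, Finset.mem_sdiff, id]
  constructor
  · intro hx
    exact ⟨fun B hB => (hx B hB).1, (hx B₀ hB₀).2⟩
  · intro hx B hB
    exact ⟨hx.1 B hB, hx.2⟩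

lemma exists_chain {α : Type*} [DecidableEq α] [Fintype α] (𝒜 : Finset (Finset α))
    (l hh : ℕ) :
    ∀ d (𝒯 : Finset (Finset α)), 𝒯 ⊆ 𝒜 → 𝒯.Nonempty → l ≤ (𝒯.inf id).card →
      (𝒯.inf id).card ≤ d → 𝒯.card + (𝒯.inf id).card ≤ hh + 1 →
      ∃ 𝒯' : Finset (Finset α), 𝒯' ⊆ 𝒜 ∧ 𝒯'.Nonempty ∧ l ≤ (𝒯'.inf id).card ∧
        (∀ B ∈ 𝒜, 𝒯'.inf id ⊆ B ∨ ((𝒯'.inf id) ∩ B).card < l) ∧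
        𝒯'.card + (𝒯'.inf id).card ≤ hh + 1 := by
  intro d
  induction d with
  | zero =>
    intro 𝒯 h𝒯𝒜 hne hl hd hcb
    refine ⟨𝒯, h𝒯𝒜, hne, hl, ?_, hcb⟩
    intro B hB
    left
    have : (𝒯.inf id).card = 0 := Nat.le_zero.mp hd
    rw [Finset.card_eq_zero.mp this]
    exact Finset.empty_subset B
  | succ d ih =>
    intro 𝒯 h𝒯𝒜 hne hl hd hcb
    by_cases hex : ∃ B ∈ 𝒜, ¬(𝒯.inf id ⊆ B) ∧ l ≤ ((𝒯.inf id) ∩ B).card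
    · obtain ⟨B, hB𝒜, hBn, hBl⟩ := hex
      have hinf' : (insert B 𝒯).inf id = B ∩ 𝒯.inf id := by
        rw [Finset.inf_insert]; rfl
      have hssub : B ∩ 𝒯.inf id ⊂ 𝒯.inf id := by
        constructor
        · exact Finset.inter_subset_right
        · intro hcontra
          exact hBn (fun x hx => (Finset.mem_inter.mp (hcontra hx)).1)
      have hcardlt : (B ∩ 𝒯.inf id).card < (𝒯.inf id).card := Finset.card_lt_card hssub
      have happly := ih (insert B 𝒯) (Finset.insert_subset hB𝒜 h𝒯𝒜)
        (Finset.insert_nonempty B 𝒯) ?_ ?_ ?_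
      · obtain ⟨𝒯', h1, h2, h3, h4, h5⟩ := happly
        exact ⟨𝒯', h1, h2, h3, h4, h5⟩
      · rw [hinf', Finset.inter_comm]; exact hBl
      · rw [hinf']; omega
      · rw [hinf']
        have := Finset.card_insert_le B 𝒯
        omega
    · push_neg at hex
      refine ⟨𝒯, h𝒯𝒜, hne, hl, ?_, hcb⟩
      intro B hB
      by_cases hsub : 𝒯.inf id ⊆ B
      · exact Or.inl hsub
      · exact Or.inr (by have := hex B hB hsub; omega)

/-- **Theorem 3.5.** Let `k ≥ 2` and `ℒ = {l 0 < ⋯ < l (s-1)}` be a set of `s`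
nonnegative integers. If `A 1, …, A m` are pairwise distinct subsets of `[n]` such
that the intersection of any `k` distinct members has cardinality in `ℒ`, `h` is the
maximum size of a member, and `n ≥ (C(h²+h, l₁+1) + 1)·s + l₁`, then
`m ≤ (k-1)·[C(n-l₁, s) + C(n-l₁, s-1) + ⋯ + C(n-l₁, 0)]`. -/
theorem stmt_6 (k s n m : ℕ) (hk : 2 ≤ k) (hs : 0 < s)
    (l : Fin s → ℕ) (hl : StrictMono l)
    (A : Fin m → Finset (Fin n)) (hA : Function.Injective A)
    (hAL : ∀ f : Fin k → Fin m, Function.Injective f →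
      ∃ t, (Finset.univ.inf fun i => A (f i)).card = l t)
    (h : ℕ) (hh₁ : ∀ j, (A j).card ≤ h) (hh₂ : ∃ j, (A j).card = h)
    (hbig : n ≥ ((h ^ 2 + h).choose (l ⟨0, hs⟩ + 1) + 1) * s + l ⟨0, hs⟩) :
    m ≤ (k - 1) * ∑ j ∈ Finset.range (s + 1), (n - l ⟨0, hs⟩).choose j := by
  classical
  set lmin := l ⟨0, hs⟩ with hlmin
  set N := n - lmin with hNdef
  set L : Finset ℕ := Finset.univ.image l with hLdef
  have hLcard : L.card = s := by
    rw [hLdef, Finset.card_image_of_injective _ hl.injective, Finset.card_univ,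
      Fintype.card_fin]
  have hlmem : lmin ∈ L := Finset.mem_image.mpr ⟨⟨0, hs⟩, Finset.mem_univ _, rfl⟩
  have hlminle : ∀ x ∈ L, lmin ≤ x := by
    intro x hx
    obtain ⟨t', _, rfl⟩ := Finset.mem_image.mp hx
    exact hl.monotone (Fin.le_def.mpr (Nat.zero_le _))
  set 𝒜 : Finset (Finset (Fin n)) := Finset.univ.image A with h𝒜def
  have h𝒜card : 𝒜.card = m := by
    rw [h𝒜def, Finset.card_image_of_injective _ hA, Finset.card_univ, Fintype.card_fin]
  have hcard𝒜 : ∀ B ∈ 𝒜, B.card ≤ h := by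
    intro B hB
    obtain ⟨j, _, rfl⟩ := Finset.mem_image.mp hB
    exact hh₁ j
  -- translate the k-wise hypothesis
  have hint : ∀ 𝒮 ⊆ 𝒜, 𝒮.card = k → ((𝒮.inf id).card ∈ L) := by
    intro 𝒮 h𝒮 hc
    obtain ⟨𝒮ᵢ, h𝒮ᵢ, himg⟩ := Finset.subset_image_iff.mp h𝒮
    have hcardi : 𝒮ᵢ.card = k := by
      rw [← hc, ← himg, Finset.card_image_of_injective _ hA]
    set f : Fin k → Fin m := fun i => (𝒮ᵢ.equivFin.symm (Fin.cast hcardi.symm i) : Fin m)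
      with hfdef
    have hfinj : Function.Injective f := by
      intro a b hab
      have h1 : 𝒮ᵢ.equivFin.symm (Fin.cast hcardi.symm a)
          = 𝒮ᵢ.equivFin.symm (Fin.cast hcardi.symm b) := Subtype.ext hab
      have h2 := 𝒮ᵢ.equivFin.symm.injective h1
      exact Fin.cast_injective _ h2
    have himgf : Finset.univ.image f = 𝒮ᵢ := by
      apply Finset.eq_of_subset_of_card_le
      · intro x hx
        obtain ⟨i, _, rfl⟩ := Finset.mem_image.mp hx
        exact (𝒮ᵢ.equivFin.symm (Fin.cast hcardi.symm i)).2
      · rw [Finset.card_image_of_injective _ hfinj, Finset.card_univ, Fintype.card_fin,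
          hcardi]
    obtain ⟨t', ht'⟩ := hAL f hfinj
    have hinfeq : (Finset.univ.inf fun i => A (f i)) = 𝒮.inf id := by
      have e1 : (Finset.univ.inf fun i => A (f i)) = Finset.univ.inf (A ∘ f) := rfl
      rw [e1, ← Finset.inf_image, himgf]
      have e2 : 𝒮ᵢ.inf A = 𝒮ᵢ.inf (id ∘ A) := rfl
      rw [e2, ← Finset.inf_image, himg]
    rw [hinfeq] at ht'
    rw [ht']
    exact Finset.mem_image.mpr ⟨t', Finset.mem_univ _, rfl⟩
  -- trivial case m < k
  have hsumpos : 1 ≤ ∑ j ∈ Finset.range (s + 1), N.choose j := by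
    have h0 : N.choose 0 ≤ ∑ j ∈ Finset.range (s + 1), N.choose j :=
      Finset.single_le_sum (fun i _ => Nat.zero_le _) (Finset.mem_range.mpr (Nat.succ_pos s))
    simpa using h0
  by_cases hm : m < k
  · calc m ≤ k - 1 := by omega
      _ = (k - 1) * 1 := (mul_one _).symm
      _ ≤ (k - 1) * ∑ j ∈ Finset.range (s + 1), N.choose j :=
        Nat.mul_le_mul_left _ hsumpos
  push_neg at hm
  have h𝒜k : k ≤ 𝒜.card := by omega
  -- pairwise intersections are ≥ lmin (including the diagonal)
  have hoff : ∀ A₁ ∈ 𝒜, ∀ A₂ ∈ 𝒜, A₁ ≠ A₂ → lmin ≤ (A₁ ∩ A₂).card := by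
    intro A₁ h₁ A₂ h₂ hne
    have hpairsub : ({A₁, A₂} : Finset (Finset (Fin n))) ⊆ 𝒜 := by
      intro x hx
      rcases Finset.mem_insert.mp hx with rfl | hx
      · exact h₁
      · rw [Finset.mem_singleton.mp hx]; exact h₂
    have hcard2 : ({A₁, A₂} : Finset (Finset (Fin n))).card = 2 := Finset.card_pair hne
    obtain ⟨u, hu1, hu2, hu3⟩ := Finset.exists_subsuperset_card_eq hpairsub
      (by rw [hcard2]; exact hk) h𝒜k
    have hmem := hint u hu2 hu3
    have hsub : u.inf id ⊆ A₁ ∩ A₂ := Finset.subset_inter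
      (inf_subset' (hu1 (Finset.mem_insert_self _ _)))
      (inf_subset' (hu1 (Finset.mem_insert_of_mem (Finset.mem_singleton_self A₂))))
    calc lmin ≤ (u.inf id).card := hlminle _ hmem
      _ ≤ (A₁ ∩ A₂).card := Finset.card_le_card hsub
  have hpair : ∀ A₁ ∈ 𝒜, ∀ A₂ ∈ 𝒜, lmin ≤ (A₁ ∩ A₂).card := by
    intro A₁ h₁ A₂ h₂
    by_cases hne : A₁ = A₂
    · subst hne
      obtain ⟨B, hB, hBne⟩ := Finset.exists_mem_ne
        (lt_of_lt_of_le one_lt_two (hk.trans h𝒜k)) A₁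
      calc lmin ≤ (A₁ ∩ B).card := hoff A₁ h₁ B hB (fun hh => hBne (hh.symm))
        _ ≤ (A₁ ∩ A₁).card := by
            rw [Finset.inter_self]
            exact Finset.card_le_card Finset.inter_subset_left
    · exact hoff A₁ h₁ A₂ h₂ hne
  by_cases hker : lmin ≤ (𝒜.inf id).card
  · -- CASE A : common kernel of size lmin
    obtain ⟨K, hK1, hK2⟩ := Finset.exists_subset_card_eq hker
    have hKsub : ∀ B ∈ 𝒜, K ⊆ B := fun B hB => hK1.trans (inf_subset' hB)
    have hinj : Set.InjOn (fun B => B \ K) ↑𝒜 := by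
      intro a ha b hb hab
      simp only at hab
      have hu : a \ K ∪ K = b \ K ∪ K := by rw [hab]
      rwa [Finset.sdiff_union_of_subset (hKsub a ha),
        Finset.sdiff_union_of_subset (hKsub b hb)] at hu
    set 𝒜' := 𝒜.image (fun B => B \ K) with h𝒜'def
    have h𝒜'card : 𝒜'.card = m := by rw [h𝒜'def, Finset.card_image_of_injOn hinj, h𝒜card]
    set L' := L.image (fun x => x - lmin) with hL'def
    have hL'card : L'.card ≤ s := le_trans Finset.card_image_le (le_of_eq hLcard)
    have hGS := GS k hk L' s hL'card (Finset.univ \ K) 𝒜' ?_ ?_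
    · have hΩcard : (Finset.univ \ K).card = N := by
        rw [Finset.card_sdiff_of_subset (Finset.subset_univ K), Finset.card_univ, Fintype.card_fin,
          hK2]
      rw [hΩcard, h𝒜'card] at hGS
      exact hGS
    · rintro B' hB'
      obtain ⟨B, hB, rfl⟩ := Finset.mem_image.mp hB'
      exact Finset.sdiff_subset_sdiff (Finset.subset_univ B) Finset.Subset.rfl
    · intro 𝒮' h𝒮' hc'
      obtain ⟨𝒮, h𝒮𝒜, himg⟩ := Finset.subset_image_iff.mp h𝒮'
      have hc : 𝒮.card = k := by
        rw [← hc', ← himg, Finset.card_image_of_injOn (hinj.mono h𝒮𝒜)]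
      have hne : 𝒮.Nonempty := by
        rw [← Finset.card_pos, hc]; omega
      have hKinf : K ⊆ 𝒮.inf id := subset_inf' (fun B hB => hKsub B (h𝒮𝒜 hB))
      have hinfeq : 𝒮'.inf id = (𝒮.inf id) \ K := by
        rw [← himg, Finset.inf_image]
        exact inf_sdiff_eq 𝒮 K hne
      rw [hinfeq, Finset.card_sdiff_of_subset hKinf, hK2]
      exact Finset.mem_image.mpr ⟨(𝒮.inf id).card, hint 𝒮 h𝒮𝒜 hc, rfl⟩
  · -- CASE B : no kernel
    push_neg at hker
    have hl1 : 1 ≤ lmin := by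
      by_contra hc
      omega
    have hhl : lmin ≤ h := by
      obtain ⟨j₀, hj₀⟩ := hh₂
      have hmem : A j₀ ∈ 𝒜 := Finset.mem_image.mpr ⟨j₀, Finset.mem_univ _, rfl⟩
      calc lmin ≤ (A j₀ ∩ A j₀).card := hpair _ hmem _ hmem
        _ = h := by rw [Finset.inter_self, hj₀]
    obtain ⟨j₀, hj₀⟩ := hh₂
    have hAj₀ : A j₀ ∈ 𝒜 := Finset.mem_image.mpr ⟨j₀, Finset.mem_univ _, rfl⟩
    have hsingle : ({A j₀} : Finset (Finset (Fin n))).inf id = A j₀ := Finset.inf_singleton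
    obtain ⟨𝒯, h𝒯𝒜, h𝒯ne, h𝒯l, h𝒯prop, h𝒯card⟩ := exists_chain 𝒜 lmin h h
      {A j₀} (Finset.singleton_subset_iff.mpr hAj₀) (Finset.singleton_nonempty _)
      (by rw [hsingle, hj₀]; exact hhl)
      (by rw [hsingle, hj₀])
      (by rw [hsingle, hj₀, Finset.card_singleton]; omega)
    set T := 𝒯.inf id with hTdef
    obtain ⟨Bstar, hBstar𝒜, hBstarn⟩ : ∃ B ∈ 𝒜, ¬ T ⊆ B := by
      by_contra hall
      push_neg at hall
      have hTle : T ⊆ 𝒜.inf id := subset_inf' (fun B hB => hall B hB)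
      have := Finset.card_le_card hTle
      omega
    have hTB : (T ∩ Bstar).card < lmin := (h𝒯prop Bstar hBstar𝒜).resolve_left hBstarn
    set W := 𝒯.sup id ∪ Bstar with hWdef
    have h𝒯count : 𝒯.card ≤ h := by omega
    have hWcard : W.card ≤ h ^ 2 + h := by
      calc W.card ≤ (𝒯.sup id).card + Bstar.card := Finset.card_union_le _ _
        _ ≤ (∑ G ∈ 𝒯, G.card) + h := by
            have h1 : (𝒯.sup id).card ≤ ∑ G ∈ 𝒯, G.card := by
              rw [Finset.sup_eq_biUnion]
              exact le_trans (Finset.card_le_card (by intro x hx; simpa using hx))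
                Finset.card_biUnion_le
            exact Nat.add_le_add h1 (hcard𝒜 _ hBstar𝒜)
        _ ≤ 𝒯.card * h + h := by
            have := Finset.sum_le_card_nsmul 𝒯 (fun G => G.card) h
              (fun G hG => hcard𝒜 G (h𝒯𝒜 hG))
            simpa [smul_eq_mul] using Nat.add_le_add this (le_refl h)
        _ ≤ h * h + h := Nat.add_le_add (Nat.mul_le_mul_right h h𝒯count) (le_refl h)
        _ = h ^ 2 + h := by ring
    have hmain : ∀ B ∈ 𝒜, lmin + 1 ≤ (B ∩ W).card := by
      intro B hB
      by_contra hcon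
      push_neg at hcon
      have hBW : ∀ G ∈ 𝒯, B ∩ G = B ∩ W := by
        intro G hG
        apply Finset.eq_of_subset_of_card_le
        · exact Finset.inter_subset_inter Finset.Subset.rfl
            ((Finset.le_iff_subset.mp (Finset.le_sup (f := id) hG)).trans Finset.subset_union_left)
        · have := hpair B hB G (h𝒯𝒜 hG)
          omega
      have hsubT : B ∩ W ⊆ T := by
        apply subset_inf'
        intro G hG
        exact (hBW G hG) ▸ (Finset.inter_subset_right : B ∩ G ⊆ id G)
      have h2 : B ∩ Bstar ⊆ T ∩ Bstar := Finset.subset_inter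
        ((Finset.inter_subset_inter Finset.Subset.rfl Finset.subset_union_right).trans hsubT)
        Finset.inter_subset_right
      have h3 := Finset.card_le_card h2
      have h4 := hpair B hB Bstar hBstar𝒜
      omega
    -- cover 𝒜 by subfamilies with kernels of size lmin+1 inside W
    have hcover : 𝒜 ⊆ (W.powersetCard (lmin + 1)).biUnion
        (fun S => 𝒜.filter (fun B => S ⊆ B)) := by
      intro B hB
      obtain ⟨S, hS1, hS2⟩ := Finset.exists_subset_card_eq (hmain B hB)
      exact Finset.mem_biUnion.mpr ⟨S,
        Finset.mem_powersetCard.mpr ⟨hS1.trans Finset.inter_subset_right, hS2⟩,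
        Finset.mem_filter.mpr ⟨hB, hS1.trans Finset.inter_subset_left⟩⟩
    set L'' := (L.filter (fun x => lmin < x)).image (fun x => x - (lmin + 1)) with hL''def
    have hL''card : L''.card ≤ s - 1 := by
      refine le_trans Finset.card_image_le ?_
      have hsubE : L.filter (fun x => lmin < x) ⊆ L.erase lmin := by
        intro x hx
        rw [Finset.mem_erase]
        exact ⟨by have := (Finset.mem_filter.mp hx).2; omega, (Finset.mem_filter.mp hx).1⟩
      calc (L.filter (fun x => lmin < x)).card ≤ (L.erase lmin).card :=
            Finset.card_le_card hsubE
        _ = s - 1 := by rw [Finset.card_erase_of_mem hlmem, hLcard]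
    have hperS : ∀ S ∈ W.powersetCard (lmin + 1),
        ((𝒜.filter (fun B => S ⊆ B)).card ≤
          (k - 1) * ∑ i ∈ Finset.range ((s - 1) + 1), (n - (lmin + 1)).choose i) := by
      intro S hS
      have hScard : S.card = lmin + 1 := (Finset.mem_powersetCard.mp hS).2
      set ℬ := 𝒜.filter (fun B => S ⊆ B) with hℬdef
      have hSsub : ∀ B ∈ ℬ, S ⊆ B := fun B hB => (Finset.mem_filter.mp hB).2
      have hℬ𝒜 : ℬ ⊆ 𝒜 := Finset.filter_subset _ _
      have hinj : Set.InjOn (fun B => B \ S) ↑ℬ := by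
        intro a ha b hb hab
        simp only at hab
        have hu : a \ S ∪ S = b \ S ∪ S := by rw [hab]
        rwa [Finset.sdiff_union_of_subset (hSsub a ha),
          Finset.sdiff_union_of_subset (hSsub b hb)] at hu
      have hGS := GS k hk L'' (s - 1) hL''card (Finset.univ \ S) (ℬ.image (fun B => B \ S))
        ?_ ?_
      · have hΩcard : ((Finset.univ : Finset (Fin n)) \ S).card = n - (lmin + 1) := by
          rw [Finset.card_sdiff_of_subset (Finset.subset_univ S), Finset.card_univ, Fintype.card_fin,
            hScard]
        rw [hΩcard, Finset.card_image_of_injOn hinj] at hGS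
        exact hGS
      · rintro B' hB'
        obtain ⟨B, hB, rfl⟩ := Finset.mem_image.mp hB'
        exact Finset.sdiff_subset_sdiff (Finset.subset_univ B) Finset.Subset.rfl
      · intro 𝒮' h𝒮' hc'
        obtain ⟨𝒮, h𝒮ℬ, himg⟩ := Finset.subset_image_iff.mp h𝒮'
        have hc : 𝒮.card = k := by
          rw [← hc', ← himg, Finset.card_image_of_injOn (hinj.mono h𝒮ℬ)]
        have hne : 𝒮.Nonempty := by
          rw [← Finset.card_pos, hc]; omega
        have hSinf : S ⊆ 𝒮.inf id := subset_inf' (fun B hB => hSsub B (h𝒮ℬ hB))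
        have hinfL : (𝒮.inf id).card ∈ L := hint 𝒮 (h𝒮ℬ.trans hℬ𝒜) hc
        have hinfgt : lmin < (𝒮.inf id).card := by
          have := Finset.card_le_card hSinf
          omega
        have hinfeq : 𝒮'.inf id = (𝒮.inf id) \ S := by
          rw [← himg, Finset.inf_image]
          exact inf_sdiff_eq 𝒮 S hne
        rw [hinfeq, Finset.card_sdiff_of_subset hSinf, hScard]
        exact Finset.mem_image.mpr ⟨(𝒮.inf id).card,
          Finset.mem_filter.mpr ⟨hinfL, hinfgt⟩, rfl⟩
    -- combine
    set Cc := (h ^ 2 + h).choose (lmin + 1) with hCc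
    have hNbig : (Cc + 1) * s ≤ N := by
      rw [hNdef]
      omega
    have hs1 : s - 1 + 1 = s := by omega
    have hsub1 : n - (lmin + 1) = N - 1 := by omega
    have harith : Cc * ∑ i ∈ Finset.range s, (N - 1).choose i ≤
        ∑ i ∈ Finset.range (s + 1), N.choose i := by
      have hterm : ∀ i ∈ Finset.range s, Cc * (N - 1).choose i ≤ N.choose (i + 1) := by
        intro i hi
        have his : i < s := Finset.mem_range.mp hi
        have hN1 : N - 1 + 1 = N := by
          have : 1 ≤ N := le_trans (by nlinarith) hNbig
          omega
        have hiden : N * (N - 1).choose i = N.choose (i + 1) * (i + 1) := by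
          have hh := Nat.add_one_mul_choose_eq (N - 1) i
          rw [hN1] at hh
          exact hh
        have hCi : Cc * (i + 1) ≤ N := by
          calc Cc * (i + 1) ≤ Cc * s := Nat.mul_le_mul_left Cc (by omega)
            _ ≤ (Cc + 1) * s := Nat.mul_le_mul_right s (by omega)
            _ ≤ N := hNbig
        have hmul : Cc * (N - 1).choose i * (i + 1) ≤ N.choose (i + 1) * (i + 1) := by
          calc Cc * (N - 1).choose i * (i + 1) = (Cc * (i + 1)) * (N - 1).choose i := by
                ring
            _ ≤ N * (N - 1).choose i := Nat.mul_le_mul_right _ hCi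
            _ = N.choose (i + 1) * (i + 1) := hiden
        exact Nat.le_of_mul_le_mul_right hmul (Nat.succ_pos i)
      calc Cc * ∑ i ∈ Finset.range s, (N - 1).choose i
          = ∑ i ∈ Finset.range s, Cc * (N - 1).choose i := Finset.mul_sum _ _ _
        _ ≤ ∑ i ∈ Finset.range s, N.choose (i + 1) := Finset.sum_le_sum hterm
        _ ≤ ∑ i ∈ Finset.range (s + 1), N.choose i := by
            rw [Finset.sum_range_succ']
            exact Nat.le_add_right _ _
    have hWchoose : W.card.choose (lmin + 1) ≤ Cc := Nat.choose_le_choose _ hWcard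
    calc m = 𝒜.card := h𝒜card.symm
      _ ≤ ((W.powersetCard (lmin + 1)).biUnion (fun S => 𝒜.filter (fun B => S ⊆ B))).card :=
          Finset.card_le_card hcover
      _ ≤ ∑ S ∈ W.powersetCard (lmin + 1), (𝒜.filter (fun B => S ⊆ B)).card :=
          Finset.card_biUnion_le
      _ ≤ (W.powersetCard (lmin + 1)).card *
          ((k - 1) * ∑ i ∈ Finset.range ((s - 1) + 1), (n - (lmin + 1)).choose i) := by
          have := Finset.sum_le_card_nsmul _ _ _ hperS
          simpa [smul_eq_mul] using this
      _ = W.card.choose (lmin + 1) * ((k - 1) * ∑ i ∈ Finset.range s, (N - 1).choose i) := by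
          rw [Finset.card_powersetCard, hs1, hsub1]
      _ ≤ Cc * ((k - 1) * ∑ i ∈ Finset.range s, (N - 1).choose i) :=
          Nat.mul_le_mul_right _ hWchoose
      _ = (k - 1) * (Cc * ∑ i ∈ Finset.range s, (N - 1).choose i) := by ring
      _ ≤ (k - 1) * ∑ i ∈ Finset.range (s + 1), N.choose i := Nat.mul_le_mul_left _ harith
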